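/- Let k ≥ 1, a > 0, s > 0 and n ≥ 1 with ρ(1+n) ≥ 1 for a real ρ > 0. Then ∫_{ρ(1+n)−1}^∞ (g+1)^{−k/2} · e^{s(1 − 1/(g+1))} · a(ρ(1+n))^a (g+1)^{−(a+1)} dg = a(ρ(1+n))^a · e^{s} · s^{−(a+k/2)} · (Γ(a + k/2) − Γ(a + k/2, s/(ρ(1+n)))), where Γ(ν_1, ν_2) = ∫_{ν_2}^∞ t^{ν_1−1} e^{−t} dt is the upper incomplete gamma function. -/

import Mathlib

open MeasureTheory Real

/-- The upper incomplete gamma function `Γ(ν₁, ν₂) = ∫_{ν₂}^∞ t^{ν₁-1} e^{-t} dt`. -/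
noncomputable def upperIncompleteGamma (ν₁ ν₂ : ℝ) : ℝ :=
  ∫ t in Set.Ioi ν₂, t ^ (ν₁ - 1) * Real.exp (-t)

lemma gamma_split (ν x : ℝ) (hν : 0 < ν) (hx : 0 < x) :
    (∫ t in Set.Ioo 0 x, t ^ (ν - 1) * Real.exp (-t)) =
      Real.Gamma ν - upperIncompleteGamma ν x := by
  have hInt : IntegrableOn (fun t : ℝ => Real.exp (-t) * t ^ (ν - 1)) (Set.Ioi 0) :=
    Real.GammaIntegral_convergent hν
  have h1 : IntegrableOn (fun t : ℝ => Real.exp (-t) * t ^ (ν - 1)) (Set.Ioo 0 x) :=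
    hInt.mono_set Set.Ioo_subset_Ioi_self
  have h2 : IntegrableOn (fun t : ℝ => Real.exp (-t) * t ^ (ν - 1)) (Set.Ici x) :=
    hInt.mono_set (Set.Ici_subset_Ioi.mpr hx)
  have hdisj : Disjoint (Set.Ioo (0:ℝ) x) (Set.Ici x) := by
    rw [Set.disjoint_left]
    rintro t ⟨_, ht2⟩ ht3
    exact absurd ht3 (not_le.mpr ht2)
  have hunion := Set.Ioo_union_Ici_eq_Ioi hx
  have hsplit : (∫ t in Set.Ioi (0:ℝ), Real.exp (-t) * t ^ (ν - 1)) =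
      (∫ t in Set.Ioo 0 x, Real.exp (-t) * t ^ (ν - 1)) +
      (∫ t in Set.Ici x, Real.exp (-t) * t ^ (ν - 1)) := by
    rw [← hunion, MeasureTheory.setIntegral_union hdisj measurableSet_Ici h1 h2]
  have hIci : (∫ t in Set.Ici x, Real.exp (-t) * t ^ (ν - 1)) =
      (∫ t in Set.Ioi x, Real.exp (-t) * t ^ (ν - 1)) :=
    MeasureTheory.integral_Ici_eq_integral_Ioi
  rw [Real.Gamma_eq_integral hν, hsplit, hIci, upperIncompleteGamma]
  simp only [mul_comm]
  ring

theorem knownSigma_bayesFactor_closed_form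
    (k : ℝ) (hk : 1 ≤ k) (a : ℝ) (ha : 0 < a) (s : ℝ) (hs : 0 < s)
    (n : ℕ) (hn : 1 ≤ n) (ρ : ℝ) (hρ : 0 < ρ) (hρn : 1 ≤ ρ * (1 + (n : ℝ))) :
    (∫ g in Set.Ioi (ρ * (1 + (n : ℝ)) - 1),
        (g + 1) ^ (-k / 2) * Real.exp (s * (1 - 1 / (g + 1))) *
          (a * (ρ * (1 + (n : ℝ))) ^ a * (g + 1) ^ (-(a + 1)))) =
      a * (ρ * (1 + (n : ℝ))) ^ a * Real.exp s * s ^ (-(a + k / 2)) *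
        (Real.Gamma (a + k / 2) -
          upperIncompleteGamma (a + k / 2) (s / (ρ * (1 + (n : ℝ))))) := by
  set c := ρ * (1 + (n : ℝ)) with hc_def
  have hc : 0 < c := lt_of_lt_of_le zero_lt_one hρn
  set ν := a + k / 2 with hν_def
  have hν : 0 < ν := by show (0:ℝ) < a + k/2; linarith
  have hx : 0 < s / c := div_pos hs hc
  -- the substitution map
  have hderiv : ∀ t ∈ Set.Ioo (0:ℝ) (s / c),
      HasDerivWithinAt (fun t : ℝ => s / t - 1) (-(s / t ^ 2)) (Set.Ioo 0 (s / c)) t := by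
    intro t ht
    have ht0 : t ≠ 0 := ne_of_gt ht.1
    have h1 : HasDerivAt (fun t : ℝ => s / t - 1) (-(s / t ^ 2)) t := by
      have h2 := ((hasDerivAt_inv ht0).const_mul s).sub_const 1
      simpa [div_eq_mul_inv, mul_neg] using h2
    exact h1.hasDerivWithinAt
  have hinj : Set.InjOn (fun t : ℝ => s / t - 1) (Set.Ioo 0 (s / c)) := by
    intro x hx' y hy' h
    simp only at h
    have h' : s / x = s / y := by linarith
    rw [div_eq_div_iff (ne_of_gt hx'.1) (ne_of_gt hy'.1)] at h'
    exact (mul_left_cancel₀ (ne_of_gt hs) h').symm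
  have himg : (fun t : ℝ => s / t - 1) '' Set.Ioo 0 (s / c) = Set.Ioi (c - 1) := by
    ext y
    simp only [Set.mem_image, Set.mem_Ioo, Set.mem_Ioi]
    constructor
    · rintro ⟨t, ⟨ht0, hts⟩, rfl⟩
      have hct : c * t < s := by
        have := mul_lt_mul_of_pos_left hts hc
        rwa [mul_div_cancel₀ s (ne_of_gt hc)] at this
      have : c < s / t := (lt_div_iff₀ ht0).mpr hct
      linarith
    · intro hy
      have hy1 : 0 < y + 1 := by linarith
      refine ⟨s / (y + 1), ⟨div_pos hs hy1, ?_⟩, ?_⟩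
      · rw [div_lt_div_iff₀ hy1 hc]
        have hcy : c < y + 1 := by linarith
        nlinarith
      · field_simp
        ring
  have hsub := MeasureTheory.integral_image_eq_integral_abs_deriv_smul measurableSet_Ioo hderiv hinj
    (fun g : ℝ => (g + 1) ^ (-k / 2) * Real.exp (s * (1 - 1 / (g + 1))) *
          (a * c ^ a * (g + 1) ^ (-(a + 1))))
  rw [himg] at hsub
  rw [hsub]
  have hpt : ∀ t ∈ Set.Ioo (0:ℝ) (s / c),
      |(-(s / t ^ 2))| • ((s / t - 1 + 1) ^ (-k / 2) * Real.exp (s * (1 - 1 / (s / t - 1 + 1))) *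
          (a * c ^ a * (s / t - 1 + 1) ^ (-(a + 1)))) =
      (a * c ^ a * Real.exp s * s ^ (-ν)) * (t ^ (ν - 1) * Real.exp (-t)) := by
    intro t ht
    have ht0 : 0 < t := ht.1
    have hst : 0 < s / t := div_pos hs ht0
    have habs : |(-(s / t ^ 2))| = s / t ^ 2 := by
      rw [abs_neg, abs_of_pos (by positivity)]
    have he : s * (1 - 1 / (s / t - 1 + 1)) = s + (-t) := by
      rw [sub_add_cancel, one_div_div]
      field_simp
      ring
    have h1 : s / t - 1 + 1 = s / t := by ring
    rw [smul_eq_mul, habs, he, h1, Real.exp_add]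
    have h3 : (-k / 2) + (-(a + 1)) = -(ν + 1) := by rw [hν_def]; ring
    have key : s / t ^ 2 * ((s / t) ^ (-k / 2) * (s / t) ^ (-(a + 1))) =
        s ^ (-ν) * t ^ (ν - 1) := by
      rw [← Real.rpow_add hst, h3, Real.rpow_neg hst.le, Real.div_rpow hs.le ht0.le,
        Real.rpow_add hs ν 1, Real.rpow_add ht0 ν 1, Real.rpow_one,
        Real.rpow_neg hs.le, Real.rpow_sub ht0, Real.rpow_one, pow_two]
      have h4 : (0:ℝ) < s ^ ν := Real.rpow_pos_of_pos hs ν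
      have h5 : (0:ℝ) < t ^ ν := Real.rpow_pos_of_pos ht0 ν
      field_simp
    calc s / t ^ 2 * ((s / t) ^ (-k / 2) * (Real.exp s * Real.exp (-t)) *
            (a * c ^ a * (s / t) ^ (-(a + 1))))
        = (s / t ^ 2 * ((s / t) ^ (-k / 2) * (s / t) ^ (-(a + 1)))) *
            (Real.exp s * Real.exp (-t)) * (a * c ^ a) := by ring
      _ = a * c ^ a * Real.exp s * s ^ (-ν) * (t ^ (ν - 1) * Real.exp (-t)) := by
          rw [key]; ring
  rw [MeasureTheory.setIntegral_congr_fun measurableSet_Ioo hpt,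
    MeasureTheory.integral_const_mul, gamma_split ν (s / c) hν hx]
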